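/- arXiv:2212.05646 — 2 statements merged into one kernel-verified Lean document; each statement's English description precedes it below -/
import Mathlib

section
/- Let H and M be real inner product spaces, κ ∈ (0,1), and N, β > 0. Then there exists a constant C > 0, depending only on N and β, such that for all U₁, U₂, U₃ ∈ H × M, d^{με}_{N,β/2}(U₁, U₃) ≤ C ( d^{με}_{N,β}(U₁, U₂) + d^{με}_{N,β}(U₂, U₃) ). -/
noncomputable section

variable {H M : Type*} [NormedAddCommGroup H] [InnerProductSpace ℝ H]
  [NormedAddCommGroup M] [InnerProductSpace ℝ M]

/-- `Ψ₀(u,η) = ½‖u‖² + ½(1-κ)‖η‖²`. -/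
def psi0 (κ : ℝ) (U : H × M) : ℝ :=
  (1 / 2) * ‖U.1‖ ^ 2 + (1 / 2) * (1 - κ) * ‖U.2‖ ^ 2

/-- The `ℓ²`-product norm `‖(u,η)‖ = (‖u‖² + ‖η‖²)^{1/2}` on `H × M`. -/
def prodNormL2 (U : H × M) : ℝ := Real.sqrt (‖U.1‖ ^ 2 + ‖U.2‖ ^ 2)

lemma prodNormL2_nonneg (U : H × M) : 0 ≤ prodNormL2 U := Real.sqrt_nonneg _

lemma fst_le_prodNormL2 (U : H × M) : ‖U.1‖ ≤ prodNormL2 U := by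
  rw [prodNormL2]
  calc ‖U.1‖ = Real.sqrt (‖U.1‖ ^ 2) := (Real.sqrt_sq (norm_nonneg _)).symm
    _ ≤ _ := Real.sqrt_le_sqrt (by nlinarith [sq_nonneg ‖U.2‖])

lemma snd_le_prodNormL2 (U : H × M) : ‖U.2‖ ≤ prodNormL2 U := by
  rw [prodNormL2]
  calc ‖U.2‖ = Real.sqrt (‖U.2‖ ^ 2) := (Real.sqrt_sq (norm_nonneg _)).symm
    _ ≤ _ := Real.sqrt_le_sqrt (by nlinarith [sq_nonneg ‖U.1‖])

lemma sqrt2_triangle (a b c d : ℝ) (ha : 0 ≤ a) (hb : 0 ≤ b) (hc : 0 ≤ c) (hd : 0 ≤ d) :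
    Real.sqrt ((a + c) ^ 2 + (b + d) ^ 2) ≤ Real.sqrt (a ^ 2 + b ^ 2) + Real.sqrt (c ^ 2 + d ^ 2) := by
  have h1 : a * c + b * d ≤ Real.sqrt (a ^ 2 + b ^ 2) * Real.sqrt (c ^ 2 + d ^ 2) := by
    rw [← Real.sqrt_mul (by positivity)]
    have h2 : (a * c + b * d) ^ 2 ≤ (a ^ 2 + b ^ 2) * (c ^ 2 + d ^ 2) := by
      nlinarith [sq_nonneg (a * d - b * c)]
    calc a * c + b * d = Real.sqrt ((a * c + b * d) ^ 2) :=
          (Real.sqrt_sq (by positivity)).symm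
      _ ≤ _ := Real.sqrt_le_sqrt h2
  calc Real.sqrt ((a + c) ^ 2 + (b + d) ^ 2)
      ≤ Real.sqrt ((Real.sqrt (a ^ 2 + b ^ 2) + Real.sqrt (c ^ 2 + d ^ 2)) ^ 2) := by
        apply Real.sqrt_le_sqrt
        nlinarith [Real.sq_sqrt (show (0:ℝ) ≤ a ^ 2 + b ^ 2 by positivity),
          Real.sq_sqrt (show (0:ℝ) ≤ c ^ 2 + d ^ 2 by positivity)]
    _ = _ := Real.sqrt_sq (by positivity)

lemma prodNormL2_add_le (X Y : H × M) :
    prodNormL2 (X + Y) ≤ prodNormL2 X + prodNormL2 Y := by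
  have h1 : ‖(X + Y).1‖ ≤ ‖X.1‖ + ‖Y.1‖ := norm_add_le _ _
  have h2 : ‖(X + Y).2‖ ≤ ‖X.2‖ + ‖Y.2‖ := norm_add_le _ _
  calc prodNormL2 (X + Y)
      ≤ Real.sqrt ((‖X.1‖ + ‖Y.1‖) ^ 2 + (‖X.2‖ + ‖Y.2‖) ^ 2) := by
        apply Real.sqrt_le_sqrt
        nlinarith [norm_nonneg (X + Y).1, norm_nonneg (X + Y).2, norm_nonneg X.1,
          norm_nonneg X.2, norm_nonneg Y.1, norm_nonneg Y.2]
    _ ≤ _ := sqrt2_triangle _ _ _ _ (norm_nonneg _) (norm_nonneg _) (norm_nonneg _) (norm_nonneg _)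

lemma prodNormL2_neg (X : H × M) : prodNormL2 (-X) = prodNormL2 X := by
  unfold prodNormL2
  simp

lemma prodNormL2_triangle (U V W : H × M) :
    prodNormL2 (U - W) ≤ prodNormL2 (U - V) + prodNormL2 (V - W) := by
  have : U - W = (U - V) + (V - W) := by abel
  rw [this]
  exact prodNormL2_add_le _ _

lemma final_combine (A B K x : ℝ) (hA : 0 ≤ A) (hB : 0 ≤ B) (hK1 : 1 ≤ K)
    (hmain : x ≤ 2 * (1 + K) * (A + B)) :
    Real.sqrt x ≤ Real.sqrt (2 * (1 + K)) * (Real.sqrt A + Real.sqrt B) := by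
  have h : x ≤ 2 * (1 + K) * (Real.sqrt A + Real.sqrt B) ^ 2 := by
    nlinarith [Real.sq_sqrt hA, Real.sq_sqrt hB,
      mul_nonneg (Real.sqrt_nonneg A) (Real.sqrt_nonneg B)]
  calc Real.sqrt x ≤ Real.sqrt (2 * (1 + K) * (Real.sqrt A + Real.sqrt B) ^ 2) :=
        Real.sqrt_le_sqrt h
    _ = Real.sqrt (2 * (1 + K)) * Real.sqrt ((Real.sqrt A + Real.sqrt B) ^ 2) :=
        Real.sqrt_mul (by positivity) _
    _ = _ := by
        rw [Real.sqrt_sq (by positivity)]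

/-- The distance-like function `d^{με}_{N,β}` on `H × M`. -/
def dEps (κ N β : ℝ) (U V : H × M) : ℝ :=
  Real.sqrt (min (N * prodNormL2 (U - V)) 1 *
    (1 + Real.exp (β * psi0 κ U) + Real.exp (β * psi0 κ V)))

set_option maxHeartbeats 1000000 in
/-- Generalized triangle inequality for `d^{με}_{N,β}`:
there is a constant `C > 0` (depending only on `N` and `β`) with
`d^{με}_{N,β/2}(U₁,U₃) ≤ C (d^{με}_{N,β}(U₁,U₂) + d^{με}_{N,β}(U₂,U₃))`. -/
theorem dEps_triangle (κ : ℝ) (hκ : κ ∈ Set.Ioo (0 : ℝ) 1)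
    (N β : ℝ) (hN : 0 < N) (hβ : 0 < β) :
    ∃ C > (0 : ℝ), ∀ U₁ U₂ U₃ : H × M,
      dEps κ N (β / 2) U₁ U₃ ≤ C * (dEps κ N β U₁ U₂ + dEps κ N β U₂ U₃) := by
  obtain ⟨hκ0, hκ1⟩ := hκ
  set K : ℝ := Real.exp (β * (1 / N) ^ 2) with hK
  have hK1 : (1:ℝ) ≤ K := Real.one_le_exp (by positivity)
  refine ⟨Real.sqrt (2 * (1 + K)), Real.sqrt_pos.mpr (by positivity), ?_⟩
  -- basic facts
  have hψ : ∀ U : H × M, 0 ≤ psi0 κ U := by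
    intro U
    have h1 : (0:ℝ) ≤ 1 - κ := by linarith
    have := sq_nonneg ‖U.1‖
    have := sq_nonneg ‖U.2‖
    unfold psi0
    nlinarith
  have hexp_half : ∀ U : H × M, Real.exp (β / 2 * psi0 κ U) ≤ Real.exp (β * psi0 κ U) := by
    intro U
    exact Real.exp_le_exp.mpr (by nlinarith [hψ U])
  -- key lemma: when points are within 1/N, the half-exponent weight is controlled
  have hkey : ∀ U V : H × M, prodNormL2 (U - V) ≤ 1 / N →
      Real.exp (β / 2 * psi0 κ V) ≤ K * Real.exp (β * psi0 κ U) := by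
    intro U V h
    have hδ : (0:ℝ) < 1 / N := by positivity
    have h1 : ‖U.1 - V.1‖ ≤ 1 / N := by
      have := fst_le_prodNormL2 (U - V)
      simp only [Prod.fst_sub] at this
      linarith
    have h2 : ‖U.2 - V.2‖ ≤ 1 / N := by
      have := snd_le_prodNormL2 (U - V)
      simp only [Prod.snd_sub] at this
      linarith
    have hV1 : ‖V.1‖ ≤ ‖U.1‖ + 1 / N := by
      have := norm_sub_norm_le V.1 U.1
      rw [norm_sub_rev] at this
      linarith
    have hV2 : ‖V.2‖ ≤ ‖U.2‖ + 1 / N := by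
      have := norm_sub_norm_le V.2 U.2
      rw [norm_sub_rev] at this
      linarith
    have ha' : ‖V.1‖ ^ 2 ≤ 2 * ‖U.1‖ ^ 2 + 2 * (1 / N) ^ 2 := by
      nlinarith [sq_nonneg (‖U.1‖ - 1 / N), norm_nonneg V.1]
    have hb' : ‖V.2‖ ^ 2 ≤ 2 * ‖U.2‖ ^ 2 + 2 * (1 / N) ^ 2 := by
      nlinarith [sq_nonneg (‖U.2‖ - 1 / N), norm_nonneg V.2]
    have hlam : (0:ℝ) ≤ 1 - κ := by linarith
    have hquad : psi0 κ V ≤ 2 * psi0 κ U + 2 * (1 / N) ^ 2 := by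
      unfold psi0
      nlinarith [mul_le_mul_of_nonneg_left hb' hlam, sq_nonneg (1 / N : ℝ),
        mul_nonneg hlam (sq_nonneg (1 / N : ℝ))]
    rw [hK, ← Real.exp_add]
    apply Real.exp_le_exp.mpr
    nlinarith [mul_le_mul_of_nonneg_left hquad (le_of_lt (by linarith : (0:ℝ) < β / 2))]
  intro U₁ U₂ U₃
  -- abbreviations
  set P12 := prodNormL2 (U₁ - U₂) with hP12
  set P23 := prodNormL2 (U₂ - U₃) with hP23
  set P13 := prodNormL2 (U₁ - U₃) with hP13
  set m12 := min (N * P12) 1 with hm12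
  set m23 := min (N * P23) 1 with hm23
  set m13 := min (N * P13) 1 with hm13
  set E1 := Real.exp (β * psi0 κ U₁) with hE1
  set E2 := Real.exp (β * psi0 κ U₂) with hE2
  set E3 := Real.exp (β * psi0 κ U₃) with hE3
  set F1 := Real.exp (β / 2 * psi0 κ U₁) with hF1
  set F3 := Real.exp (β / 2 * psi0 κ U₃) with hF3
  have hm12_nonneg : 0 ≤ m12 :=
    le_min (mul_nonneg hN.le (by rw [hP12]; exact prodNormL2_nonneg _)) zero_le_one
  have hm23_nonneg : 0 ≤ m23 :=
    le_min (mul_nonneg hN.le (by rw [hP23]; exact prodNormL2_nonneg _)) zero_le_one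
  have hm12_le_one : m12 ≤ 1 := min_le_right _ _
  have hE1_pos : 0 < E1 := Real.exp_pos _
  have hE2_pos : 0 < E2 := Real.exp_pos _
  have hE3_pos : 0 < E3 := Real.exp_pos _
  have hF1_pos : 0 < F1 := Real.exp_pos _
  have hF3_pos : 0 < F3 := Real.exp_pos _
  have hF1E1 : F1 ≤ E1 := hexp_half U₁
  have hF3E3 : F3 ≤ E3 := hexp_half U₃
  -- min subadditivity
  have hm_sub : m13 ≤ m12 + m23 := by
    have htri : P13 ≤ P12 + P23 := prodNormL2_triangle U₁ U₂ U₃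
    rcases le_total (N * P12) 1 with h|h
    · rcases le_total (N * P23) 1 with h'|h'
      · rw [hm12, hm23, min_eq_left h, min_eq_left h']
        calc m13 ≤ N * P13 := min_le_left _ _
          _ ≤ N * (P12 + P23) := by nlinarith
          _ = N * P12 + N * P23 := by ring
      · have : m23 = 1 := min_eq_right h'
        have : m13 ≤ 1 := min_le_right _ _
        linarith [hm12_nonneg]
    · have : m12 = 1 := min_eq_right h
      have : m13 ≤ 1 := min_le_right _ _
      linarith [hm23_nonneg]
  -- the two cross estimates
  have hcross13 : m12 * F3 ≤ m23 * (1 + E2 + E3) + K * (m12 * (1 + E1 + E2)) := by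
    rcases le_total (N * P23) 1 with h|h
    · -- close: P23 ≤ 1/N, apply key lemma
      have hP : P23 ≤ 1 / N := by
        rw [div_eq_mul_inv]
        calc P23 = N * P23 * N⁻¹ := by field_simp
          _ ≤ 1 * N⁻¹ := by
            apply mul_le_mul_of_nonneg_right h (by positivity)
      have := hkey U₂ U₃ hP
      have h2 : m12 * F3 ≤ m12 * (K * E2) := mul_le_mul_of_nonneg_left this hm12_nonneg
      have h3 : m12 * (K * E2) ≤ K * (m12 * (1 + E1 + E2)) := by nlinarith [mul_nonneg hm12_nonneg (le_of_lt hE1_pos)]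
      nlinarith [mul_nonneg hm23_nonneg (by positivity : (0:ℝ) ≤ 1 + E2 + E3)]
    · -- far: m23 = 1
      have hm23_one : m23 = 1 := min_eq_right h
      have h2 : m12 * F3 ≤ 1 * E3 := by nlinarith
      have h3 : (1:ℝ) * E3 ≤ m23 * (1 + E2 + E3) := by rw [hm23_one]; nlinarith
      have h4 : (0:ℝ) ≤ K * (m12 * (1 + E1 + E2)) := by
        apply mul_nonneg (by linarith)
        apply mul_nonneg hm12_nonneg (by positivity)
      linarith
  have hcross31 : m23 * F1 ≤ m12 * (1 + E1 + E2) + K * (m23 * (1 + E2 + E3)) := by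
    rcases le_total (N * P12) 1 with h|h
    · have hP : P12 ≤ 1 / N := by
        rw [div_eq_mul_inv]
        calc P12 = N * P12 * N⁻¹ := by field_simp
          _ ≤ 1 * N⁻¹ := by
            apply mul_le_mul_of_nonneg_right h (by positivity)
      have hPrev : prodNormL2 (U₂ - U₁) ≤ 1 / N := by
        rw [show U₂ - U₁ = -(U₁ - U₂) by abel, prodNormL2_neg, ← hP12]
        exact hP
      have := hkey U₂ U₁ hPrev
      have h2 : m23 * F1 ≤ m23 * (K * E2) := mul_le_mul_of_nonneg_left this hm23_nonneg
      have h3 : m23 * (K * E2) ≤ K * (m23 * (1 + E2 + E3)) := by nlinarith [mul_nonneg hm23_nonneg (le_of_lt hE3_pos)]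
      nlinarith [mul_nonneg hm12_nonneg (by positivity : (0:ℝ) ≤ 1 + E1 + E2)]
    · have hm12_one : m12 = 1 := min_eq_right h
      have hm23_le_one : m23 ≤ 1 := min_le_right _ _
      have h2 : m23 * F1 ≤ 1 * E1 := by nlinarith
      have h3 : (1:ℝ) * E1 ≤ m12 * (1 + E1 + E2) := by rw [hm12_one]; nlinarith
      have h4 : (0:ℝ) ≤ K * (m23 * (1 + E2 + E3)) := by
        apply mul_nonneg (by linarith)
        apply mul_nonneg hm23_nonneg (by positivity)
      linarith
  -- main product estimate
  set A := m12 * (1 + E1 + E2) with hA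
  set B := m23 * (1 + E2 + E3) with hB
  have hA_nonneg : 0 ≤ A := mul_nonneg hm12_nonneg (by positivity)
  have hB_nonneg : 0 ≤ B := mul_nonneg hm23_nonneg (by positivity)
  have hmain : m13 * (1 + F1 + F3) ≤ 2 * (1 + K) * (A + B) := by
    have hS_nonneg : (0:ℝ) ≤ 1 + F1 + F3 := by positivity
    have step1 : m13 * (1 + F1 + F3) ≤ m12 * (1 + F1 + F3) + m23 * (1 + F1 + F3) := by
      nlinarith
    have step2 : m12 * (1 + F1 + F3) ≤ A + (B + K * A) := by
      have e1 : m12 * (1 + F1) ≤ A := by rw [hA]; nlinarith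
      have e2 : m12 * F3 ≤ B + K * A := hcross13
      nlinarith
    have step3 : m23 * (1 + F1 + F3) ≤ B + (A + K * B) := by
      have hm23_le_one : m23 ≤ 1 := min_le_right _ _
      have e1 : m23 * (1 + F3) ≤ B := by rw [hB]; nlinarith
      have e2 : m23 * F1 ≤ A + K * B := hcross31
      nlinarith
    nlinarith
  -- conclude
  have hD12 : dEps κ N β U₁ U₂ = Real.sqrt A := by rw [dEps]
  have hD23 : dEps κ N β U₂ U₃ = Real.sqrt B := by rw [dEps]
  have hD13 : dEps κ N (β / 2) U₁ U₃ = Real.sqrt (m13 * (1 + F1 + F3)) := by rw [dEps]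
  rw [hD12, hD23, hD13]
  exact final_combine A B K _ hA_nonneg hB_nonneg hK1 hmain

end
end

section
/- Let δ > 0 and let μ : [0,∞) → (0,∞) be continuously differentiable with μ′(s) + δ μ(s) ≤ 0 for all s ≥ 0, and assume ∫₀^∞ s² μ(s) ds < ∞. For ε > 0 set μ_ε(s) = ε^{−2} μ(s/ε). Then for every ε > 0 and every a ≥ 0, ∫_a^∞ s μ_ε(s) ds ≤ ( (∫₀^∞ s² μ(s) ds) · μ(0)/δ )^{1/2} e^{−δ a/(2ε)}. -/
open MeasureTheory

lemma decay_aux' {δ : ℝ} (hδ : 0 < δ) {μ μ' : ℝ → ℝ}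
    (hderiv : ∀ s, 0 ≤ s → HasDerivAt μ (μ' s) s)
    (hdiss : ∀ s, 0 ≤ s → μ' s + δ * μ s ≤ 0) :
    ∀ s, 0 ≤ s → μ s ≤ μ 0 * Real.exp (-δ * s) := by
  have hμcont : ContinuousOn μ (Set.Ici 0) := fun s hs =>
    (hderiv s hs).continuousAt.continuousWithinAt
  set g : ℝ → ℝ := fun x => μ x * Real.exp (δ * x) with hg
  have hgd : ∀ x, 0 ≤ x →
      HasDerivAt g ((μ' x + δ * μ x) * Real.exp (δ * x)) x := by
    intro x hx
    have h1 : HasDerivAt (fun y : ℝ => Real.exp (δ * y)) (δ * Real.exp (δ * x)) x := by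
      simpa [mul_comm] using ((hasDerivAt_id x).const_mul δ).exp
    have := (hderiv x hx).mul h1
    exact this.congr_deriv (by ring)
  have hganti : AntitoneOn g (Set.Ici 0) := by
    apply antitoneOn_of_deriv_nonpos (convex_Ici 0)
    · exact hμcont.mul (Real.continuous_exp.comp (continuous_const.mul continuous_id)).continuousOn
    · intro x hx
      rw [interior_Ici] at hx
      exact (hgd x (le_of_lt hx)).differentiableAt.differentiableWithinAt
    · intro x hx
      rw [interior_Ici] at hx
      rw [(hgd x hx.le).deriv]
      exact mul_nonpos_of_nonpos_of_nonneg (hdiss x hx.le) (Real.exp_pos _).le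
  intro s hs
  have := hganti (Set.self_mem_Ici) hs hs
  simp only [hg, mul_zero, Real.exp_zero, mul_one] at this
  have hE : (0:ℝ) < Real.exp (δ * s) := Real.exp_pos _
  rw [neg_mul, Real.exp_neg]
  rw [← sub_nonneg]
  have h0 : (0:ℝ) ≤ (μ 0 - μ s * Real.exp (δ * s)) * (Real.exp (δ * s))⁻¹ :=
    mul_nonneg (by linarith) (by positivity)
  have h1 : (μ 0 - μ s * Real.exp (δ * s)) * (Real.exp (δ * s))⁻¹
      = μ 0 * (Real.exp (δ * s))⁻¹ - μ s := by field_simp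
  linarith [h1 ▸ h0]

/-- First-moment tail bound for the rescaled kernel
`μ_ε(s) = ε⁻² μ(s/ε)`:
`∫_a^∞ s μ_ε(s) ds ≤ ((∫₀^∞ s² μ(s) ds) · μ(0)/δ)^{1/2} e^{-δ a/(2ε)}`. -/
theorem integral_rescaled_kernel_firstMoment_tail_le
    (δ : ℝ) (hδ : 0 < δ) (μ μ' : ℝ → ℝ)
    (hpos : ∀ s, 0 ≤ s → 0 < μ s)
    (hderiv : ∀ s, 0 ≤ s → HasDerivAt μ (μ' s) s)
    (hcont : ContinuousOn μ' (Set.Ici 0))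
    (hdiss : ∀ s, 0 ≤ s → μ' s + δ * μ s ≤ 0)
    (hint : IntegrableOn (fun s => s ^ 2 * μ s) (Set.Ioi 0))
    (ε : ℝ) (hε : 0 < ε) (a : ℝ) (ha : 0 ≤ a) :
    ∫ s in Set.Ioi a, s * ((1 / ε ^ 2) * μ (s / ε)) ≤
      Real.sqrt ((∫ s in Set.Ioi (0 : ℝ), s ^ 2 * μ s) * μ 0 / δ) *
        Real.exp (-δ * a / (2 * ε)) := by
  have decay := decay_aux' hδ hderiv hdiss
  have hμcont : ContinuousOn μ (Set.Ici 0) := fun s hs =>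
    (hderiv s hs).continuousAt.continuousWithinAt
  have hμ0 : 0 < μ 0 := hpos 0 le_rfl
  set M : ℝ := ∫ s in Set.Ioi (0 : ℝ), s ^ 2 * μ s with hMdef
  -- positivity of M
  have hM : 0 < M := by
    rw [hMdef, setIntegral_pos_iff_support_of_nonneg_ae ?_ hint]
    · refine lt_of_lt_of_le ?_ (measure_mono (?_ : Set.Ioo (0:ℝ) 1 ⊆ _))
      · simp [Real.volume_Ioo]
      · intro x hx
        refine ⟨?_, hx.1⟩
        simp only [Function.mem_support]
        have h1 := hpos x (le_of_lt hx.1)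
        have h2 : 0 < x ^ 2 * μ x := mul_pos (pow_pos hx.1 2) h1
        exact h2.ne'
    · filter_upwards [ae_restrict_mem measurableSet_Ioi] with x hx
      have := hpos x (le_of_lt hx)
      positivity
  -- integrability of μ on Ioi 0
  have hμmeas : ∀ c : ℝ, 0 ≤ c → IntegrableOn μ (Set.Ioi c) := by
    have h0 : IntegrableOn μ (Set.Ioi 0) := by
      refine Integrable.mono' ((exp_neg_integrableOn_Ioi 0 hδ).const_mul (μ 0)) ?_ ?_
      · exact (hμcont.mono Set.Ioi_subset_Ici_self).aestronglyMeasurable measurableSet_Ioi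
      · filter_upwards [ae_restrict_mem measurableSet_Ioi] with x hx
        rw [Real.norm_eq_abs, abs_of_pos (hpos x hx.le)]
        simpa [neg_mul] using decay x hx.le
    intro c hc
    exact h0.mono_set (Set.Ioi_subset_Ioi hc)
  have hεinv : (0:ℝ) < ε⁻¹ := inv_pos.2 hε
  -- integrability of s² μ(s/ε) on Ioi 0
  have h2int : IntegrableOn (fun s => s ^ 2 * ((1 / ε ^ 2) * μ (s / ε))) (Set.Ioi 0) := by
    have h := (integrableOn_Ioi_comp_mul_right_iff (fun x => x ^ 2 * μ x) 0 hεinv).2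
      (by simpa using hint)
    have h' := h.const_mul (ε ^ 2 * (1 / ε ^ 2))
    refine IntegrableOn.congr_fun h' ?_ measurableSet_Ioi
    intro x hx
    simp only [div_eq_mul_inv, one_mul]
    field_simp
  have h2int' : IntegrableOn (fun s => s ^ 2 * ((1 / ε ^ 2) * μ (s / ε))) (Set.Ioi a) :=
    h2int.mono_set (Set.Ioi_subset_Ioi ha)
  -- integrability of μ(s/ε) on Ioi a
  have h0int : IntegrableOn (fun s => (1 / ε ^ 2) * μ (s / ε)) (Set.Ioi a) := by
    have h := (integrableOn_Ioi_comp_mul_right_iff μ a hεinv).2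
      (hμmeas (a * ε⁻¹) (by positivity))
    have h' := h.const_mul (1 / ε ^ 2)
    refine IntegrableOn.congr_fun h' ?_ measurableSet_Ioi
    intro x hx
    simp only [div_eq_mul_inv]
  -- integrability of the integrand
  have hFint : IntegrableOn (fun s => s * ((1 / ε ^ 2) * μ (s / ε))) (Set.Ioi a) := by
    refine Integrable.mono' (h2int'.add h0int) ?_ ?_
    · apply ContinuousOn.aestronglyMeasurable ?_ measurableSet_Ioi
      apply ContinuousOn.mul continuousOn_id
      apply ContinuousOn.mul continuousOn_const
      refine hμcont.comp (continuousOn_id.div_const ε) ?_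
      intro x hx
      exact div_nonneg (le_of_lt (lt_of_le_of_lt ha hx)) hε.le
    · filter_upwards [ae_restrict_mem measurableSet_Ioi] with x hx
      have hx0 : 0 ≤ x := le_of_lt (lt_of_le_of_lt ha hx)
      have hμx : 0 < μ (x / ε) := hpos _ (by positivity)
      rw [Real.norm_eq_abs, abs_of_nonneg (by positivity)]
      simp only [Pi.add_apply]
      have hy : (0:ℝ) ≤ (1 / ε ^ 2) * μ (x / ε) := by positivity
      have hxx : x ≤ x ^ 2 + 1 := by nlinarith [sq_nonneg (x - 1)]
      nlinarith [mul_le_mul_of_nonneg_right hxx hy]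
  -- the parameters
  set E : ℝ := Real.exp (-δ * a / (2 * ε)) with hEdef
  have hE : 0 < E := Real.exp_pos _
  set u : ℝ := Real.sqrt (M * μ 0 / δ) with hudef
  have hu2 : u ^ 2 = M * μ 0 / δ := Real.sq_sqrt (by positivity)
  have hu : 0 < u := Real.sqrt_pos.2 (by positivity)
  set t : ℝ := u * E / (M * ε) with htdef
  have ht : 0 < t := by positivity
  -- pointwise AM-GM bound and integral monotonicity
  have step1 : ∫ s in Set.Ioi a, s * ((1 / ε ^ 2) * μ (s / ε)) ≤
      ∫ s in Set.Ioi a, (t * (s ^ 2 * ((1 / ε ^ 2) * μ (s / ε)))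
        + (1 / t) * ((1 / ε ^ 2) * μ (s / ε))) / 2 := by
    refine setIntegral_mono_on hFint ?_ measurableSet_Ioi ?_
    · exact ((h2int'.const_mul t).add (h0int.const_mul (1 / t))).div_const 2
    · intro x hx
      have hx0 : 0 ≤ x := le_of_lt (lt_of_le_of_lt ha hx)
      have hμx : 0 ≤ (1 / ε ^ 2) * μ (x / ε) :=
        le_of_lt (mul_pos (by positivity) (hpos _ (by positivity)))
      set y := (1 / ε ^ 2) * μ (x / ε)
      have h1 : 0 ≤ (t * x - 1) ^ 2 * y * (1 / t) := by positivity
      have h2 : t * (1 / t) = 1 := mul_one_div_cancel ht.ne'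
      nlinarith [h1, h2]
  -- split the right-hand integral
  have step2 : ∫ s in Set.Ioi a, (t * (s ^ 2 * ((1 / ε ^ 2) * μ (s / ε)))
        + (1 / t) * ((1 / ε ^ 2) * μ (s / ε))) / 2
      = (t * (∫ s in Set.Ioi a, s ^ 2 * ((1 / ε ^ 2) * μ (s / ε)))
        + (1 / t) * ∫ s in Set.Ioi a, (1 / ε ^ 2) * μ (s / ε)) / 2 := by
    rw [integral_div, integral_add (h2int'.const_mul t) (h0int.const_mul (1 / t)),
      integral_const_mul, integral_const_mul]
  -- bound the second moment term
  have stepA : (∫ s in Set.Ioi a, s ^ 2 * ((1 / ε ^ 2) * μ (s / ε))) ≤ ε * M := by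
    have hmono : (∫ s in Set.Ioi a, s ^ 2 * ((1 / ε ^ 2) * μ (s / ε)))
        ≤ ∫ s in Set.Ioi 0, s ^ 2 * ((1 / ε ^ 2) * μ (s / ε)) := by
      refine setIntegral_mono_set h2int ?_ ?_
      · filter_upwards [ae_restrict_mem measurableSet_Ioi] with x hx
        have hx' : (0:ℝ) < x := hx
        have := hpos (x / ε) (by positivity)
        positivity
      · exact HasSubset.Subset.eventuallyLE (Set.Ioi_subset_Ioi ha)
    refine hmono.trans_eq ?_
    have key : ∀ s : ℝ, s ^ 2 * ((1 / ε ^ 2) * μ (s / ε))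
        = (fun x => x ^ 2 * μ x) (s * ε⁻¹) := by
      intro s
      rw [show s / ε = s * ε⁻¹ from div_eq_mul_inv s ε]
      simp only
      field_simp
    simp_rw [key]
    rw [integral_comp_mul_right_Ioi (fun x => x ^ 2 * μ x) 0 hεinv]
    simp only [zero_mul, smul_eq_mul, inv_inv]
    rw [hMdef]
  -- bound the zeroth moment term
  have stepB : (∫ s in Set.Ioi a, (1 / ε ^ 2) * μ (s / ε))
      ≤ ε⁻¹ * (μ 0 * Real.exp (-δ * (a * ε⁻¹)) / δ) := by
    have key : ∀ s : ℝ, (1 / ε ^ 2) * μ (s / ε) = (1 / ε ^ 2) * μ (s * ε⁻¹) := by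
      intro s; rw [show s / ε = s * ε⁻¹ from div_eq_mul_inv s ε]
    simp_rw [key]
    rw [integral_const_mul, integral_comp_mul_right_Ioi μ a hεinv]
    simp only [smul_eq_mul, inv_inv]
    have hc : (0:ℝ) ≤ a * ε⁻¹ := by positivity
    have hbound : (∫ x in Set.Ioi (a * ε⁻¹), μ x)
        ≤ ∫ x in Set.Ioi (a * ε⁻¹), μ 0 * Real.exp (-δ * x) := by
      refine setIntegral_mono_on (hμmeas _ hc) ?_ measurableSet_Ioi ?_
      · exact (exp_neg_integrableOn_Ioi _ hδ).const_mul (μ 0)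
      · intro x hx
        exact decay x (hc.trans hx.le)
    have hexp : (∫ x in Set.Ioi (a * ε⁻¹), μ 0 * Real.exp (-δ * x))
        = μ 0 * (Real.exp (-(δ * (a * ε⁻¹))) / δ) := by
      rw [integral_const_mul]
      have : ∀ x : ℝ, Real.exp (-δ * x) = (fun y => Real.exp (-y)) (δ * x) := by
        intro x; simp [neg_mul]
      simp_rw [this]
      rw [integral_comp_mul_left_Ioi (fun y => Real.exp (-y)) _ hδ,
        integral_exp_neg_Ioi]
      simp [smul_eq_mul, div_eq_inv_mul]
    have : (1 / ε ^ 2) * (ε * ∫ x in Set.Ioi (a * ε⁻¹), μ x)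
        ≤ (1 / ε ^ 2) * (ε * (μ 0 * (Real.exp (-(δ * (a * ε⁻¹))) / δ))) := by
      have h2 := hbound.trans_eq hexp
      have hnn : (0:ℝ) ≤ (1 / ε ^ 2) * ε := by positivity
      calc (1 / ε ^ 2) * (ε * ∫ x in Set.Ioi (a * ε⁻¹), μ x)
          = ((1 / ε ^ 2) * ε) * ∫ x in Set.Ioi (a * ε⁻¹), μ x := by ring
        _ ≤ ((1 / ε ^ 2) * ε) * (μ 0 * (Real.exp (-(δ * (a * ε⁻¹))) / δ)) :=
            mul_le_mul_of_nonneg_left h2 hnn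
        _ = (1 / ε ^ 2) * (ε * (μ 0 * (Real.exp (-(δ * (a * ε⁻¹))) / δ))) := by ring
    refine this.trans_eq ?_
    rw [show -δ * (a * ε⁻¹) = -(δ * (a * ε⁻¹)) by ring]
    field_simp
  -- combine
  have hexpsq : Real.exp (-δ * (a * ε⁻¹)) = E ^ 2 := by
    rw [hEdef, sq, ← Real.exp_add, Real.exp_eq_exp]
    field_simp
    ring
  have final : (t * (ε * M) + (1 / t) * (ε⁻¹ * (μ 0 * Real.exp (-δ * (a * ε⁻¹)) / δ))) / 2
      = u * E := by
    have e1 : t * (ε * M) = u * E := by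
      rw [htdef]; field_simp
    have hu2' : δ * u ^ 2 = M * μ 0 := by
      rw [hu2]; field_simp
    have e2 : (1 / t) * (ε⁻¹ * (μ 0 * Real.exp (-δ * (a * ε⁻¹)) / δ)) = u * E := by
      rw [hexpsq, htdef, one_div_div]
      rw [div_mul_eq_mul_div, div_eq_iff (by positivity : (u * E) ≠ 0)]
      field_simp
      linear_combination (-1) * hu2'
    rw [e1, e2]
    ring
  calc ∫ s in Set.Ioi a, s * ((1 / ε ^ 2) * μ (s / ε))
      ≤ (t * (∫ s in Set.Ioi a, s ^ 2 * ((1 / ε ^ 2) * μ (s / ε)))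
        + (1 / t) * ∫ s in Set.Ioi a, (1 / ε ^ 2) * μ (s / ε)) / 2 := step1.trans_eq step2
    _ ≤ (t * (ε * M) + (1 / t) * (ε⁻¹ * (μ 0 * Real.exp (-δ * (a * ε⁻¹)) / δ))) / 2 := by
        have h1 := mul_le_mul_of_nonneg_left stepA ht.le
        have h2 := mul_le_mul_of_nonneg_left stepB (by positivity : (0:ℝ) ≤ 1 / t)
        linarith
    _ = u * E := final
end
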